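/- arXiv:1203.0803 — 4 statements merged into one kernel-verified Lean document; each statement's English description precedes it below -/
import Mathlib

section
/- Let A and B be finite-dimensional subspaces of a Hilbert space W with dim A = dim B. Then δ(A,B) = δ(B,A), where δ(A,B) = sup_{x ∈ A, ‖x‖=1} dist(x,B). Consequently gap(A,B) := max(δ(A,B), δ(B,A)) equals δ(A,B). -/
open scoped InnerProductSpace

/-- `δ(A,B) = sup_{x ∈ A, ‖x‖=1} ‖x - P_B x‖`. -/
noncomputable def subspaceDelta {W : Type*} [NormedAddCommGroup W] [InnerProductSpace ℝ W]
    (A B : Submodule ℝ W) [B.HasOrthogonalProjection] : ℝ :=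
  sSup {r : ℝ | ∃ x ∈ A, ‖x‖ = 1 ∧ r = ‖x - (B.orthogonalProjectionOnto x : W)‖}

private lemma pythag {W : Type*} [NormedAddCommGroup W] [InnerProductSpace ℝ W]
    (K : Submodule ℝ W) [K.HasOrthogonalProjection] (x : W) :
    ‖x - (K.orthogonalProjectionOnto x : W)‖ ^ 2 = ‖x‖ ^ 2 - ‖(K.orthogonalProjectionOnto x : W)‖ ^ 2 := by
  have h : ⟪(K.orthogonalProjectionOnto x : W), x - (K.orthogonalProjectionOnto x : W)⟫_ℝ = 0 := by
    rw [real_inner_comm]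
    exact K.starProjection_inner_eq_zero x _ (Submodule.coe_mem _)
  have h2 := norm_add_sq_real (K.orthogonalProjectionOnto x : W) (x - (K.orthogonalProjectionOnto x : W))
  rw [h, add_sub_cancel] at h2
  linarith

private lemma minmin {E F : Type*} [NormedAddCommGroup E] [InnerProductSpace ℝ E]
    [NormedAddCommGroup F] [InnerProductSpace ℝ F]
    [FiniteDimensional ℝ E] [FiniteDimensional ℝ F]
    (hdim : Module.finrank ℝ E = Module.finrank ℝ F)
    (T : E →L[ℝ] F) (c : ℝ) (hc : 0 ≤ c)
    (h : ∀ x : E, ‖x‖ = 1 → c ≤ ‖T x‖)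
    (y : F) (hy : ‖y‖ = 1) : c ≤ ‖ContinuousLinearMap.adjoint T y‖ := by
  rcases eq_or_lt_of_le hc with h0 | hc
  · exact h0 ▸ norm_nonneg _
  have hb : ∀ x : E, c * ‖x‖ ≤ ‖T x‖ := by
    intro x
    rcases eq_or_ne x 0 with rfl | hx
    · simp
    · have hnx : ‖x‖ ≠ 0 := norm_ne_zero_iff.mpr hx
      have := h (‖x‖⁻¹ • x) (by simp [norm_smul, inv_mul_cancel₀ hnx])
      rw [map_smul, norm_smul, norm_inv, norm_norm] at this
      have hpos : (0:ℝ) < ‖x‖ := lt_of_le_of_ne (norm_nonneg x) (Ne.symm hnx)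
      calc c * ‖x‖ ≤ (‖x‖⁻¹ * ‖T x‖) * ‖x‖ := by nlinarith
        _ = ‖T x‖ := by field_simp
  have hinj : Function.Injective T := by
    intro a b hab
    have h1 : T (a - b) = 0 := by rw [map_sub, hab, sub_self]
    have := hb (a - b)
    rw [h1, norm_zero] at this
    have : ‖a - b‖ ≤ 0 := by nlinarith
    have : a - b = 0 := norm_le_zero_iff.mp this
    exact sub_eq_zero.mp this
  have hsurj : Function.Surjective T := by
    have : LinearMap.range (T : E →ₗ[ℝ] F) = ⊤ := by
      apply Submodule.eq_top_of_finrank_eq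
      rw [LinearMap.finrank_range_of_inj hinj, hdim]
    exact LinearMap.range_eq_top.mp this
  obtain ⟨x, hx⟩ := hsurj y
  have h1 : ⟪ContinuousLinearMap.adjoint T y, x⟫_ℝ = 1 := by
    rw [ContinuousLinearMap.adjoint_inner_left, hx, real_inner_self_eq_norm_sq, hy]; norm_num
  have hcs := real_inner_le_norm (ContinuousLinearMap.adjoint T y) x
  rw [h1] at hcs
  have hxle : c * ‖x‖ ≤ 1 := by
    have := hb x
    rw [hx, hy] at this
    exact this
  nlinarith [norm_nonneg x, norm_nonneg (ContinuousLinearMap.adjoint T y)]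

private lemma sq_le_imp {a b : ℝ} (_ha : 0 ≤ a) (hb : 0 ≤ b) (h : a ^ 2 ≤ b ^ 2) : a ≤ b := by
  nlinarith

set_option maxHeartbeats 1000000 in
private lemma delta_le {W : Type*} [NormedAddCommGroup W] [InnerProductSpace ℝ W]
    [CompleteSpace W] (A B : Submodule ℝ W) [FiniteDimensional ℝ A] [FiniteDimensional ℝ B]
    (hdim : Module.finrank ℝ A = Module.finrank ℝ B) :
    subspaceDelta A B ≤ subspaceDelta B A := by
  by_cases hB : B = ⊥
  · have hA : A = ⊥ := by
      have : Module.finrank ℝ A = 0 := by rw [hdim, hB]; simp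
      exact Submodule.finrank_eq_zero.mp this
    subst hA; subst hB
    have he : ∀ (C D : Submodule ℝ W) [D.HasOrthogonalProjection],
        C = ⊥ → subspaceDelta C D = 0 := by
      intro C D _ hC
      subst hC
      unfold subspaceDelta
      convert Real.sSup_empty using 2
      ext r
      simp only [Set.mem_setOf_eq, Set.mem_empty_iff_false, iff_false]
      rintro ⟨x, hx, hx1, -⟩
      rw [Submodule.mem_bot] at hx
      subst hx
      simp at hx1
    rw [he ⊥ ⊥ rfl]
  -- main case
  set T' : B →L[ℝ] A := A.orthogonalProjectionOnto.comp B.subtypeL with hT'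
  set T : A →L[ℝ] B := B.orthogonalProjectionOnto.comp A.subtypeL with hT
  have hadj : T = ContinuousLinearMap.adjoint T' := by
    rw [ContinuousLinearMap.eq_adjoint_iff]
    intro x y
    simp [hT, hT', Submodule.coe_inner]
  haveI : Nontrivial B := Submodule.nontrivial_iff_ne_bot.mpr hB
  obtain ⟨y₀, hy₀s, hmin⟩ := (isCompact_sphere (0:B) 1).exists_isMinOn
    (NormedSpace.sphere_nonempty.mpr zero_le_one)
    ((continuous_norm.comp T'.continuous).continuousOn)
  have hy₀ : ‖y₀‖ = 1 := by simpa using hy₀s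
  set c := ‖T' y₀‖ with hc
  have hc0 : 0 ≤ c := norm_nonneg _
  have hlow : ∀ y : B, ‖y‖ = 1 → c ≤ ‖T' y‖ := by
    intro y hy
    exact hmin (by simpa using hy)
  -- the witness element of the B→A set
  have hy₀W : ‖(y₀ : W)‖ = 1 := hy₀
  set rB := ‖(y₀ : W) - (A.orthogonalProjectionOnto (y₀ : W) : W)‖ with hrB
  have hTy₀ : ‖T' y₀‖ = ‖(A.orthogonalProjectionOnto (y₀ : W) : W)‖ := rfl
  have hrB2 : rB ^ 2 = 1 - c ^ 2 := by
    rw [hrB, pythag, hy₀W, hc, hTy₀]; norm_num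
  have hrBmem : rB ∈ {r : ℝ | ∃ x ∈ B, ‖x‖ = 1 ∧
      r = ‖x - (A.orthogonalProjectionOnto x : W)‖} :=
    ⟨(y₀ : W), y₀.2, hy₀W, rfl⟩
  have hbdd : BddAbove {r : ℝ | ∃ x ∈ B, ‖x‖ = 1 ∧
      r = ‖x - (A.orthogonalProjectionOnto x : W)‖} := by
    refine ⟨1, ?_⟩
    rintro r ⟨x, hx, hx1, rfl⟩
    have hp := pythag A x
    rw [hx1] at hp
    refine sq_le_imp (norm_nonneg _) zero_le_one ?_
    have := sq_nonneg ‖(A.orthogonalProjectionOnto x : W)‖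
    rw [hp]; nlinarith
  have hrBle : rB ≤ subspaceDelta B A := le_csSup hbdd hrBmem
  apply Real.sSup_le
  · rintro r ⟨x, hxA, hx1, rfl⟩
    have hxA1 : ‖(⟨x, hxA⟩ : A)‖ = 1 := hx1
    have hkey : c ≤ ‖ContinuousLinearMap.adjoint T' (⟨x, hxA⟩ : A)‖ :=
      minmin hdim.symm T' c hc0 hlow _ hxA1
    rw [← hadj] at hkey
    have hTx : ‖T (⟨x, hxA⟩ : A)‖ = ‖(B.orthogonalProjectionOnto x : W)‖ := rfl
    rw [hTx] at hkey
    have hp := pythag B x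
    rw [hx1] at hp
    have hsq : c ^ 2 ≤ ‖(B.orthogonalProjectionOnto x : W)‖ ^ 2 := pow_le_pow_left₀ hc0 hkey 2
    have : ‖x - (B.orthogonalProjectionOnto x : W)‖ ≤ rB := by
      refine sq_le_imp (norm_nonneg _) (norm_nonneg _) ?_
      rw [hp, hrB2]; linarith
    linarith
  · have h0rB : 0 ≤ rB := norm_nonneg _
    linarith

/-- For finite-dimensional subspaces of equal dimension, `δ(A,B) = δ(B,A)`, and hence
`gap(A,B) = max(δ(A,B), δ(B,A)) = δ(A,B)`. -/
theorem delta_symm_of_finrank_eq {W : Type*} [NormedAddCommGroup W] [InnerProductSpace ℝ W]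
    [CompleteSpace W] (A B : Submodule ℝ W) [FiniteDimensional ℝ A] [FiniteDimensional ℝ B]
    (hdim : Module.finrank ℝ A = Module.finrank ℝ B) :
    subspaceDelta A B = subspaceDelta B A ∧
      max (subspaceDelta A B) (subspaceDelta B A) = subspaceDelta A B := by
  have h1 := delta_le A B hdim
  have h2 := delta_le B A hdim.symm
  have he : subspaceDelta A B = subspaceDelta B A := le_antisymm h1 h2
  exact ⟨he, by rw [he, max_self]⟩
end

section
/- Let A and B be finite-dimensional subspaces of a Hilbert space with dim A = dim B. If δ(A,B) < 1, then the orthogonal projection P_B restricted to A maps A bijectively onto B. -/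
open scoped InnerProductSpace

lemma norm_sub_proj_le {W : Type*} [NormedAddCommGroup W] [InnerProductSpace ℝ W]
    (B : Submodule ℝ W) [B.HasOrthogonalProjection] (x : W) :
    ‖x - (B.orthogonalProjectionOnto x : W)‖ ≤ ‖x‖ := by
  rw [← Submodule.starProjection_apply, Submodule.starProjection_minimal]
  have : ⨅ w : B, ‖x - (w : W)‖ ≤ ‖x - ((0 : B) : W)‖ :=
    ciInf_le ⟨0, by rintro r ⟨w, rfl⟩; positivity⟩ (0 : B)
  simpa using this

/-- If `A` and `B` are finite-dimensional subspaces of a Hilbert space of equal dimension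
and `δ(A,B) < 1`, then the orthogonal projection `P_B` maps `A` bijectively onto `B`. -/
theorem projection_bijective_of_delta_lt_one {W : Type*} [NormedAddCommGroup W]
    [InnerProductSpace ℝ W] [CompleteSpace W] (A B : Submodule ℝ W)
    [FiniteDimensional ℝ A] [FiniteDimensional ℝ B]
    (hdim : Module.finrank ℝ A = Module.finrank ℝ B)
    (hlt : subspaceDelta A B < 1) :
    Function.Bijective (fun a : A => B.orthogonalProjectionOnto (a : W)) := by
  set f : A →ₗ[ℝ] B := (B.orthogonalProjectionOnto).toLinearMap ∘ₗ A.subtype with hf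
  have hbdd : BddAbove {r : ℝ | ∃ x ∈ A, ‖x‖ = 1 ∧ r = ‖x - (B.orthogonalProjectionOnto x : W)‖} := by
    refine ⟨1, ?_⟩
    rintro r ⟨x, hxA, hx1, rfl⟩
    calc ‖x - (B.orthogonalProjectionOnto x : W)‖ ≤ ‖x‖ := norm_sub_proj_le B x
      _ = 1 := hx1
  have hinj : Function.Injective f := by
    rw [← LinearMap.ker_eq_bot, LinearMap.ker_eq_bot']
    intro a ha
    by_contra hne
    have hnorm : ‖(a : W)‖ ≠ 0 := by
      simpa [Submodule.coe_eq_zero] using hne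
    set x : W := ‖(a : W)‖⁻¹ • (a : W) with hx
    have hxA : x ∈ A := A.smul_mem _ a.2
    have hx1 : ‖x‖ = 1 := by
      rw [hx, norm_smul, norm_inv, norm_norm, inv_mul_cancel₀ hnorm]
    have hproj : (B.orthogonalProjectionOnto x : W) = 0 := by
      have h0 : B.orthogonalProjectionOnto (a : W) = 0 := by
        have := congrArg (Subtype.val) ha
        simpa [f, Submodule.coe_eq_zero] using ha
      rw [hx, map_smul, h0, smul_zero, Submodule.coe_zero]
    have hmem : (1 : ℝ) ∈ {r : ℝ | ∃ x ∈ A, ‖x‖ = 1 ∧ r = ‖x - (B.orthogonalProjectionOnto x : W)‖} :=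
      ⟨x, hxA, hx1, by rw [hproj, sub_zero, hx1]⟩
    have : (1 : ℝ) ≤ subspaceDelta A B := le_csSup hbdd hmem
    linarith
  have hbij : Function.Bijective f :=
    ⟨hinj, (LinearMap.injective_iff_surjective_of_finrank_eq_finrank hdim).mp hinj⟩
  exact hbij
end

section
/- Let H and H_h be closed subspaces of a Hilbert space W, and let u_h ∈ W satisfy u_h ⊥ H_h. Then ‖P_H u_h‖ ≤ δ(H, H_h) · ‖u_h‖, where P_H is the orthogonal projection onto H and δ(H,H_h) = sup_{q ∈ H, ‖q‖=1} ‖q - P_{H_h} q‖. -/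
open scoped InnerProductSpace

lemma subspaceDelta_bdd {W : Type*} [NormedAddCommGroup W] [InnerProductSpace ℝ W]
    (A B : Submodule ℝ W) [B.HasOrthogonalProjection] :
    BddAbove {r : ℝ | ∃ x ∈ A, ‖x‖ = 1 ∧ r = ‖x - (B.orthogonalProjectionOnto x : W)‖} := by
  refine ⟨2, ?_⟩
  rintro r ⟨x, _, hx1, rfl⟩
  calc ‖x - (B.orthogonalProjectionOnto x : W)‖ ≤ ‖x‖ + ‖(B.orthogonalProjectionOnto x : W)‖ :=
        norm_sub_le _ _
    _ ≤ ‖x‖ + ‖x‖ := by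
        have := Submodule.orthogonalProjectionOnto_norm_le B
        have h2 : ‖B.orthogonalProjectionOnto x‖ ≤ ‖x‖ := by
          calc ‖B.orthogonalProjectionOnto x‖ ≤ ‖B.orthogonalProjectionOnto‖ * ‖x‖ :=
                (B.orthogonalProjectionOnto).le_opNorm x
            _ ≤ 1 * ‖x‖ := mul_le_mul_of_nonneg_right this (norm_nonneg _)
            _ = ‖x‖ := one_mul _
        simpa using h2
    _ = 2 := by rw [hx1]; norm_num

/-- If `u_h ⊥ H_h`, then `‖P_H u_h‖ ≤ δ(H, H_h) ‖u_h‖`. -/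
theorem norm_projection_le_delta_mul_norm {W : Type*} [NormedAddCommGroup W]
    [InnerProductSpace ℝ W] [CompleteSpace W] (H Hh : Submodule ℝ W)
    [CompleteSpace H] [CompleteSpace Hh]
    (uh : W) (huh : ∀ v ∈ Hh, ⟪uh, v⟫_ℝ = 0) :
    ‖(H.orthogonalProjectionOnto uh : W)‖ ≤ subspaceDelta H Hh * ‖uh‖ := by
  set p : W := (H.orthogonalProjectionOnto uh : W) with hp
  by_cases hp0 : p = 0
  · rw [hp0, norm_zero]
    have hδ : 0 ≤ subspaceDelta H Hh := by
      rcases Set.eq_empty_or_nonempty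
        {r : ℝ | ∃ x ∈ H, ‖x‖ = 1 ∧ r = ‖x - (Hh.orthogonalProjectionOnto x : W)‖} with he | ⟨r, hr⟩
      · simp only [subspaceDelta, he, Real.sSup_empty, le_refl]
      · obtain ⟨x, _, _, rfl⟩ := hr
        exact le_trans (norm_nonneg _) (le_csSup (subspaceDelta_bdd H Hh) ⟨x, ‹_›, ‹_›, rfl⟩)
    positivity
  · set q : W := ‖p‖⁻¹ • p with hq
    have hpn : (0:ℝ) < ‖p‖ := norm_pos_iff.2 hp0
    have hqH : q ∈ H := H.smul_mem _ (H.orthogonalProjectionOnto uh).2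
    have hq1 : ‖q‖ = 1 := by
      rw [hq, norm_smul, norm_inv, norm_norm, inv_mul_cancel₀ hpn.ne']
    -- ⟪uh, p⟫ = ‖p‖²
    have horth : ⟪uh - p, p⟫_ℝ = 0 :=
      Submodule.starProjection_inner_eq_zero (K := H) uh p (H.orthogonalProjectionOnto uh).2
    have hip : ⟪q, uh⟫_ℝ = ‖p‖ := by
      have h1 : ⟪uh, p⟫_ℝ = ‖p‖ ^ 2 := by
        have := horth
        rw [inner_sub_left, sub_eq_zero] at this
        rw [this, real_inner_self_eq_norm_sq]
      rw [hq, inner_smul_left, real_inner_comm, h1, conj_trivial]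
      field_simp
    -- ⟪q, uh⟫ = ⟪q - P_{Hh} q, uh⟫
    have hsplit : ⟪q, uh⟫_ℝ = ⟪q - (Hh.orthogonalProjectionOnto q : W), uh⟫_ℝ := by
      rw [inner_sub_left]
      have : ⟪(Hh.orthogonalProjectionOnto q : W), uh⟫_ℝ = 0 := by
        rw [real_inner_comm]
        exact huh _ (Hh.orthogonalProjectionOnto q).2
      rw [this, sub_zero]
    have hcs : ‖p‖ ≤ ‖q - (Hh.orthogonalProjectionOnto q : W)‖ * ‖uh‖ := by
      calc ‖p‖ = ⟪q - (Hh.orthogonalProjectionOnto q : W), uh⟫_ℝ := by rw [← hsplit, hip]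
        _ ≤ ‖q - (Hh.orthogonalProjectionOnto q : W)‖ * ‖uh‖ := real_inner_le_norm _ _
    have hmem : ‖q - (Hh.orthogonalProjectionOnto q : W)‖ ≤ subspaceDelta H Hh :=
      le_csSup (subspaceDelta_bdd H Hh) ⟨q, hqH, hq1, rfl⟩
    calc ‖p‖ ≤ ‖q - (Hh.orthogonalProjectionOnto q : W)‖ * ‖uh‖ := hcs
      _ ≤ subspaceDelta H Hh * ‖uh‖ := by
          exact mul_le_mul_of_nonneg_right hmem (norm_nonneg _)
end

section
/- Let W be a Hilbert space with orthogonal Hodge decomposition W = B ⊕ H ⊕ B*, Z = B ⊕ H. Let H_h ⊂ Z be a finite-dimensional subspace with dim H_h = dim H = M < ∞ and suppose δ(H_h, H) ≤ μ where δ(H_h,H) = sup_{q ∈ H_h, ‖q‖=1} ‖q - P_H q‖. Then for any u_h ⊥ H_h with discrete decomposition u_h = ũ_h + u_h^⊥ where ũ_h ∈ B and u_h^⊥ ⊥ H_h, and any q ∈ H with ‖q‖=1: ⟨u_h, q⟩ ≤ μ · (‖P_B u_h^⊥‖ + ‖P_H u_h‖). -/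
open scoped InnerProductSpace

set_option maxHeartbeats 1000000

/-- Pythagoras for orthogonal projection. -/
lemma pyth_sub' {W : Type*} [NormedAddCommGroup W] [InnerProductSpace ℝ W]
    (K : Submodule ℝ W) [K.HasOrthogonalProjection] (v : W) :
    ‖v - (Submodule.orthogonalProjectionOnto K v : W)‖ ^ 2 = ‖v‖ ^ 2 - ‖(Submodule.orthogonalProjectionOnto K v : W)‖ ^ 2 := by
  have h := Submodule.norm_sq_eq_add_norm_sq_projection v K
  have h2 : ‖Submodule.orthogonalProjectionOnto Kᗮ v‖ = ‖v - (Submodule.orthogonalProjectionOnto K v : W)‖ := by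
    exact congrArg norm (Submodule.starProjection_orthogonal_val (K := K) v)
  have h3 : ‖Submodule.orthogonalProjectionOnto K v‖ = ‖(Submodule.orthogonalProjectionOnto K v : W)‖ := rfl
  rw [h2, h3] at h
  linarith

/-- One-sided gap symmetry for equal finite dimensions, pointwise form. -/
lemma gap_symm_dist {W : Type*} [NormedAddCommGroup W] [InnerProductSpace ℝ W]
    (H Hh : Submodule ℝ W) [CompleteSpace H] [CompleteSpace Hh]
    [FiniteDimensional ℝ Hh] [FiniteDimensional ℝ H]
    (hdim : Module.finrank ℝ Hh = Module.finrank ℝ H)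
    (μ : ℝ) (hμ0 : 0 ≤ μ)
    (hA : ∀ x ∈ Hh, ‖x‖ = 1 → ‖x - (Submodule.orthogonalProjectionOnto H x : W)‖ ≤ μ)
    (q : W) (hq : q ∈ H) (hqn : ‖q‖ = 1) :
    ‖q - (Submodule.orthogonalProjectionOnto Hh q : W)‖ ≤ μ := by
  by_cases h1 : 1 ≤ μ
  · have hp := pyth_sub' Hh q
    have h2 := norm_nonneg (q - (Submodule.orthogonalProjectionOnto Hh q : W))
    have h3 := norm_nonneg ((Submodule.orthogonalProjectionOnto Hh q : W))
    nlinarith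
  · push_neg at h1
    set c := Real.sqrt (1 - μ ^ 2) with hc
    have hc0 : 0 < c := Real.sqrt_pos.mpr (by nlinarith)
    have hc2 : c ^ 2 = 1 - μ ^ 2 := Real.sq_sqrt (by nlinarith)
    -- scaled bound
    have hAc : ∀ a : Hh, ‖(a : W) - (Submodule.orthogonalProjectionOnto H (a : W) : W)‖ ≤ μ * ‖(a : W)‖ := by
      intro a
      rcases eq_or_ne a 0 with h | h
      · subst h; simp
      · have hna : (0 : ℝ) < ‖(a : W)‖ := by
          rw [norm_pos_iff]
          exact fun h0 => h (Subtype.ext h0)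
        set x : W := ‖(a : W)‖⁻¹ • (a : W) with hx
        have hxm : x ∈ Hh := Hh.smul_mem _ a.2
        have hxn : ‖x‖ = 1 := by
          rw [hx, norm_smul, norm_inv, norm_norm]
          field_simp
        have hb := hA x hxm hxn
        have hPx : (Submodule.orthogonalProjectionOnto H x : W)
            = ‖(a : W)‖⁻¹ • (Submodule.orthogonalProjectionOnto H (a : W) : W) := by
          rw [hx, map_smul]
          rfl
        rw [hx, hPx, ← smul_sub, norm_smul, norm_inv, norm_norm] at hb
        have h2 := mul_le_mul_of_nonneg_left hb hna.le
        rw [← mul_assoc, mul_inv_cancel₀ hna.ne', one_mul] at h2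
        linarith [h2, mul_comm ‖(a : W)‖ μ]
    -- the projection operator T : Hh → H
    set T : Hh →ₗ[ℝ] H := ((Submodule.orthogonalProjectionOnto H).toLinearMap).comp (Hh.subtype) with hTdef
    have hT : ∀ a : Hh, ((T a : H) : W) = (Submodule.orthogonalProjectionOnto H (a : W) : W) := fun a => rfl
    have hTlow : ∀ a : Hh, c * ‖a‖ ≤ ‖T a‖ := by
      intro a
      have hp := pyth_sub' H ((a : W))
      have h2 := hAc a
      have hsq : (c * ‖a‖) ^ 2 ≤ ‖T a‖ ^ 2 := by
        have hnTa : ‖T a‖ = ‖(Submodule.orthogonalProjectionOnto H (a : W) : W)‖ := by rw [← hT a]; rfl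
        have hnaa : ‖a‖ = ‖(a : W)‖ := rfl
        rw [hnTa, hnaa, mul_pow, hc2]
        nlinarith [norm_nonneg ((a : W) - (Submodule.orthogonalProjectionOnto H (a : W) : W)),
          norm_nonneg (a : W)]
      nlinarith [norm_nonneg (T a), mul_nonneg hc0.le (norm_nonneg a)]
    have hTinj : Function.Injective T := by
      intro a b hab
      have h0 : T (a - b) = 0 := by rw [map_sub, hab, sub_self]
      have h2 := hTlow (a - b)
      rw [h0, norm_zero] at h2
      have h3 : ‖a - b‖ ≤ 0 := by
        exact le_of_mul_le_mul_left (h2.trans_eq (mul_zero c).symm) hc0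
      rw [norm_le_zero_iff, sub_eq_zero] at h3
      exact h3
    have hTsurj := (LinearMap.injective_iff_surjective_of_finrank_eq_finrank hdim).mp hTinj
    set e : Hh ≃ₗ[ℝ] H := LinearEquiv.ofBijective T ⟨hTinj, hTsurj⟩ with hedef
    set S : H →ₗ[ℝ] Hh := e.symm.toLinearMap with hSdef
    have hTS : ∀ b : H, T (S b) = b := by
      intro b
      have := e.apply_symm_apply b
      exact this
    have hSlow : ∀ b : H, c * ‖S b‖ ≤ ‖b‖ := by
      intro b
      have := hTlow (S b)
      rwa [hTS b] at this
    have hcomp : ∀ b : H, LinearMap.adjoint S (LinearMap.adjoint T b) = b := by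
      intro b
      apply ext_inner_right ℝ
      intro y
      rw [LinearMap.adjoint_inner_left, LinearMap.adjoint_inner_left, hTS]
    have hA'bound : ∀ x : Hh, c * ‖LinearMap.adjoint S x‖ ≤ ‖x‖ := by
      intro x
      rcases eq_or_lt_of_le (norm_nonneg (LinearMap.adjoint S x)) with h | h
      · rw [← h, mul_zero]; exact norm_nonneg x
      · have hinner : ‖LinearMap.adjoint S x‖ ^ 2 = ⟪x, S (LinearMap.adjoint S x)⟫_ℝ := by
          rw [← LinearMap.adjoint_inner_left S, real_inner_self_eq_norm_sq]
        have hcs := real_inner_le_norm x (S (LinearMap.adjoint S x))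
        have hsl := hSlow (LinearMap.adjoint S x)
        nlinarith [norm_nonneg x, norm_nonneg (S (LinearMap.adjoint S x)),
          mul_le_mul_of_nonneg_left hcs hc0.le,
          mul_le_mul_of_nonneg_left hsl (norm_nonneg x)]
    set qH : H := ⟨q, hq⟩ with hqHdef
    have hqH : ‖qH‖ = 1 := hqn
    have hkey : c ≤ ‖LinearMap.adjoint T qH‖ := by
      have := hA'bound (LinearMap.adjoint T qH)
      rw [hcomp qH, hqH, mul_one] at this
      exact this
    have hAq : (LinearMap.adjoint T qH : Hh) = Submodule.orthogonalProjectionOnto Hh q := by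
      apply ext_inner_right ℝ
      intro a
      rw [LinearMap.adjoint_inner_left]
      rw [Submodule.coe_inner, Submodule.coe_inner]
      have h1 : ⟪(qH : W), ((T a : H) : W)⟫_ℝ = ⟪q, (a : W)⟫_ℝ := by
        have hmem := Submodule.sub_starProjection_mem_orthogonal (K := H) (a : W)
        have h0 : ⟪q, (a : W) - (Submodule.orthogonalProjectionOnto H (a : W) : W)⟫_ℝ = 0 :=
          (Submodule.mem_orthogonal H _).1 hmem q hq
        rw [inner_sub_right] at h0
        rw [hT a]
        show ⟪q, (Submodule.orthogonalProjectionOnto H (a : W) : W)⟫_ℝ = ⟪q, (a : W)⟫_ℝ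
        linarith
      have h2 : ⟪q, (a : W)⟫_ℝ = ⟪(Submodule.orthogonalProjectionOnto Hh q : W), (a : W)⟫_ℝ := by
        have h0 : ⟪q - (Submodule.orthogonalProjectionOnto Hh q : W), (a : W)⟫_ℝ = 0 :=
          Submodule.starProjection_inner_eq_zero q (a : W) a.2
        rw [inner_sub_left] at h0
        linarith
      rw [h1, h2]
    have hnormA : ‖LinearMap.adjoint T qH‖ = ‖(Submodule.orthogonalProjectionOnto Hh q : W)‖ := by
      rw [hAq]; rfl
    have hp := pyth_sub' Hh q
    rw [hnormA] at hkey
    nlinarith [norm_nonneg (q - (Submodule.orthogonalProjectionOnto Hh q : W)),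
      norm_nonneg ((Submodule.orthogonalProjectionOnto Hh q : W)),
      mul_le_mul hkey hkey hc0.le (norm_nonneg _)]

/-- Sharper bound for the harmonic component: with `W = B ⊕ H ⊕ B*`, `Z = B ⊔ H`,
`H_h ≤ Z` of the same finite dimension as `H` with `δ(H_h,H) ≤ μ`, if `u_h ⊥ H_h` and
`u_h = ũ_h + u_h^⊥` with `ũ_h ∈ B`, `u_h^⊥ ⊥ H_h`, then for every unit `q ∈ H`,
`⟪u_h, q⟫ ≤ μ (‖P_B u_h^⊥‖ + ‖P_H u_h‖)`. -/
theorem harmonic_inner_bound {W : Type*} [NormedAddCommGroup W]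
    [InnerProductSpace ℝ W] [CompleteSpace W] (B H Bs : Submodule ℝ W)
    [CompleteSpace B] [CompleteSpace H]
    (hBH : ∀ b ∈ B, ∀ h ∈ H, ⟪b, h⟫_ℝ = 0)
    (hBBs : ∀ b ∈ B, ∀ s ∈ Bs, ⟪b, s⟫_ℝ = 0)
    (hHBs : ∀ h ∈ H, ∀ s ∈ Bs, ⟪h, s⟫_ℝ = 0)
    (hsup : B ⊔ H ⊔ Bs = ⊤)
    (Z : Submodule ℝ W) [CompleteSpace Z] (hZ : Z = B ⊔ H)
    (Hh : Submodule ℝ W) [CompleteSpace Hh] (hHhZ : Hh ≤ Z)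
    [FiniteDimensional ℝ Hh] [FiniteDimensional ℝ H]
    (hdim : Module.finrank ℝ Hh = Module.finrank ℝ H)
    (μ : ℝ) (hμ : subspaceDelta Hh H ≤ μ)
    (uh ut up : W) (huh : ∀ v ∈ Hh, ⟪uh, v⟫_ℝ = 0)
    (hut : ut ∈ B) (hup : ∀ v ∈ Hh, ⟪up, v⟫_ℝ = 0) (hsum : uh = ut + up)
    (q : W) (hq : q ∈ H) (hqn : ‖q‖ = 1) :
    ⟪uh, q⟫_ℝ ≤
      μ * (‖(B.orthogonalProjectionOnto up : W)‖ + ‖(H.orthogonalProjectionOnto uh : W)‖) := by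
  classical
  -- the sup set is bounded above by 1
  have hbdd : BddAbove {r : ℝ | ∃ x ∈ Hh, ‖x‖ = 1 ∧
      r = ‖x - (Submodule.orthogonalProjectionOnto H x : W)‖} := by
    refine ⟨1, ?_⟩
    rintro r ⟨x, hx, hxn, rfl⟩
    have hp := pyth_sub' H x
    nlinarith [norm_nonneg (x - (Submodule.orthogonalProjectionOnto H x : W)),
      norm_nonneg ((Submodule.orthogonalProjectionOnto H x : W))]
  have hA : ∀ x ∈ Hh, ‖x‖ = 1 → ‖x - (Submodule.orthogonalProjectionOnto H x : W)‖ ≤ μ := by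
    intro x hx hxn
    exact le_trans (le_csSup hbdd ⟨x, hx, hxn, rfl⟩) hμ
  -- a unit vector in Hh, to get 0 ≤ μ
  have hq0 : (⟨q, hq⟩ : H) ≠ 0 := by
    intro h
    have : q = 0 := congrArg Subtype.val h
    rw [this, norm_zero] at hqn
    exact one_ne_zero hqn.symm
  have hfr : 0 < Module.finrank ℝ Hh := by
    rw [hdim]
    exact Module.finrank_pos_iff_exists_ne_zero.mpr ⟨⟨q, hq⟩, hq0⟩
  obtain ⟨x0, hx0⟩ := Module.finrank_pos_iff_exists_ne_zero.mp hfr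
  have hx0n : (0 : ℝ) < ‖(x0 : W)‖ := by
    rw [norm_pos_iff]
    exact fun h0 => hx0 (Subtype.ext h0)
  have hμ0 : 0 ≤ μ := by
    refine le_trans (norm_nonneg _) (hA (‖(x0 : W)‖⁻¹ • (x0 : W)) (Hh.smul_mem _ x0.2) ?_)
    rw [norm_smul, norm_inv, norm_norm]
    field_simp
  have hdist := gap_symm_dist H Hh hdim μ hμ0 hA q hq hqn
  set Pq : W := (Submodule.orthogonalProjectionOnto Hh q : W) with hPqdef
  have hPqm : Pq ∈ Hh := Submodule.coe_mem _
  -- reduce the inner product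
  have hqPq : ⟪uh, q⟫_ℝ = ⟪uh, q - Pq⟫_ℝ := by
    rw [inner_sub_right, huh Pq hPqm, sub_zero]
  have hut0 : ⟪ut, q - Pq⟫_ℝ = 0 := by
    have h1 : ⟪ut, q⟫_ℝ = 0 := hBH ut hut q hq
    have h2 : ⟪ut, Pq⟫_ℝ = 0 := by
      have h3 := huh Pq hPqm
      have h4 := hup Pq hPqm
      rw [hsum, inner_add_left] at h3
      linarith
    rw [inner_sub_right, h1, h2, sub_zero]
  have hsplit : ⟪uh, q - Pq⟫_ℝ = ⟪up, q - Pq⟫_ℝ := by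
    rw [hsum, inner_add_left, hut0, zero_add]
  -- P_H uh = P_H up
  have hPH : (Submodule.orthogonalProjectionOnto H uh : W) = (Submodule.orthogonalProjectionOnto H up : W) := by
    have hut_perp : ut ∈ Hᗮ := by
      rw [Submodule.mem_orthogonal]
      intro u hu
      rw [real_inner_comm]
      exact hBH ut hut u hu
    have h0 : Submodule.orthogonalProjectionOnto H ut = 0 :=
      Submodule.orthogonalProjectionOnto_apply_of_mem_orthogonal hut_perp
    have : Submodule.orthogonalProjectionOnto H uh = Submodule.orthogonalProjectionOnto H up := by
      rw [hsum, map_add, h0, zero_add]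
    rw [this]
  -- q - Pq lies in B ⊔ H
  have hmemZ : q - Pq ∈ B ⊔ H := by
    have hqZ : q ∈ B ⊔ H := Submodule.mem_sup_right hq
    have hPqZ : Pq ∈ B ⊔ H := by
      rw [← hZ]
      exact hHhZ hPqm
    exact Submodule.sub_mem _ hqZ hPqZ
  obtain ⟨b', hb', h', hh', hbh⟩ := Submodule.mem_sup.mp hmemZ
  have hup_eq : ⟪up, q - Pq⟫_ℝ =
      ⟪(Submodule.orthogonalProjectionOnto B up : W) + (Submodule.orthogonalProjectionOnto H up : W), q - Pq⟫_ℝ := by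
    have hw : ⟪up - (Submodule.orthogonalProjectionOnto B up : W) - (Submodule.orthogonalProjectionOnto H up : W),
        q - Pq⟫_ℝ = 0 := by
      rw [← hbh, inner_add_right]
      have e1 : ⟪up - (Submodule.orthogonalProjectionOnto B up : W), b'⟫_ℝ = 0 :=
        Submodule.starProjection_inner_eq_zero up b' hb'
      have e2 : ⟪(Submodule.orthogonalProjectionOnto H up : W), b'⟫_ℝ = 0 := by
        rw [real_inner_comm]
        exact hBH b' hb' _ (Submodule.coe_mem _)
      have e3 : ⟪up - (Submodule.orthogonalProjectionOnto H up : W), h'⟫_ℝ = 0 :=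
        Submodule.starProjection_inner_eq_zero up h' hh'
      have e4 : ⟪(Submodule.orthogonalProjectionOnto B up : W), h'⟫_ℝ = 0 :=
        hBH _ (Submodule.coe_mem _) h' hh'
      simp only [inner_sub_left] at e1 e3 ⊢
      linarith
    simp only [inner_sub_left, inner_add_left] at hw ⊢
    linarith
  -- finish
  rw [hqPq, hsplit, hup_eq, ← hPH]
  have hcs := real_inner_le_norm
    ((Submodule.orthogonalProjectionOnto B up : W) + (Submodule.orthogonalProjectionOnto H uh : W)) (q - Pq)
  have htri := norm_add_le ((Submodule.orthogonalProjectionOnto B up : W))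
    ((Submodule.orthogonalProjectionOnto H uh : W))
  have h1 : ‖(Submodule.orthogonalProjectionOnto B up : W) + (Submodule.orthogonalProjectionOnto H uh : W)‖ * ‖q - Pq‖
      ≤ (‖(Submodule.orthogonalProjectionOnto B up : W)‖ + ‖(Submodule.orthogonalProjectionOnto H uh : W)‖) * μ :=
    mul_le_mul htri hdist (norm_nonneg _) (by positivity)
  calc ⟪(Submodule.orthogonalProjectionOnto B up : W) + (Submodule.orthogonalProjectionOnto H uh : W), q - Pq⟫_ℝ
      ≤ ‖(Submodule.orthogonalProjectionOnto B up : W) + (Submodule.orthogonalProjectionOnto H uh : W)‖ * ‖q - Pq‖ := hcs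
    _ ≤ (‖(Submodule.orthogonalProjectionOnto B up : W)‖ + ‖(Submodule.orthogonalProjectionOnto H uh : W)‖) * μ := h1
    _ = μ * (‖(Submodule.orthogonalProjectionOnto B up : W)‖ + ‖(Submodule.orthogonalProjectionOnto H uh : W)‖) :=
      mul_comm _ _
end
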